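/- Let C be a category with binary products and an initial object 0. Then C satisfies property (P) (products of coequalizer diagrams are coequalizer diagrams) if and only if for every coequalizer diagram q : X → Y of (u, v : C₁ → X) and every object Z, the morphism q × 1_Z : X × Z → Y × Z is a coequalizer of (u × 0_Z, v × 0_Z), where 0_Z denotes the unique morphism from the initial object to Z (so the parallel pair has domain C₁ × 0). -/

import Mathlib

open CategoryTheory Limits

/-- `q` is a coequalizer of the parallel pair `(u, v)`. -/
def IsCoeq {C : Type*} [Category C] {T X Q : C} (u v : T ⟶ X) (q : X ⟶ Q) : Prop :=
  ∃ h : u ≫ q = v ≫ q, Nonempty (IsColimit (Cofork.ofπ q h))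

/-- Property (P): the product of two coequalizer diagrams is a coequalizer diagram. -/
def PropertyP (C : Type*) [Category C] [HasBinaryProducts C] : Prop :=
  ∀ {T₁ T₂ X X' Y Y' : C} (u v : T₁ ⟶ X) (u' v' : T₂ ⟶ Y) (q₁ : X ⟶ X') (q₂ : Y ⟶ Y'),
    IsCoeq u v q₁ → IsCoeq u' v' q₂ →
      IsCoeq (prod.map u u') (prod.map v v') (prod.map q₁ q₂)

/-- The identity is a coequalizer of any pair of equal maps. -/
lemma isCoeq_id {C : Type*} [Category C] {T Z : C} (f : T ⟶ Z) : IsCoeq f f (𝟙 Z) :=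
  ⟨rfl, ⟨Cofork.IsColimit.mk _ (fun s => s.π) (fun s => by simp) (fun s m w => by simpa using w)⟩⟩

theorem stmt3 {C : Type*} [Category C] [HasBinaryProducts C] [HasInitial C] :
    PropertyP C ↔
      ∀ {T X Y : C} (u v : T ⟶ X) (q : X ⟶ Y), IsCoeq u v q → ∀ Z : C,
        IsCoeq (prod.map u (initial.to Z)) (prod.map v (initial.to Z))
          (prod.map q (𝟙 Z)) := by
  constructor
  · intro hP T X Y u v q hq Z
    exact hP u v (initial.to Z) (initial.to Z) q (𝟙 Z) hq (isCoeq_id _)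
  · intro H T₁ T₂ X X' Y Y' u v u' v' q₁ q₂ h₁ h₂
    obtain ⟨w₁, ⟨c₁⟩⟩ := H u v q₁ h₁ Y
    obtain ⟨w₂, ⟨c₂⟩⟩ := H u' v' q₂ h₂ X'
    obtain ⟨e₁, ⟨_⟩⟩ := h₁
    obtain ⟨e₂, ⟨_⟩⟩ := h₂
    have cond : prod.map u u' ≫ prod.map q₁ q₂ = prod.map v v' ≫ prod.map q₁ q₂ := by
      rw [prod.map_map, prod.map_map, e₁, e₂]
    -- the composite `q₁ × q₂` is an epimorphism
    have ep1 : Epi (prod.map q₁ (𝟙 Y)) :=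
      ⟨fun g h w => Cofork.IsColimit.hom_ext c₁ (by simpa using w)⟩
    have ep2 : Epi (prod.map q₂ (𝟙 X')) :=
      ⟨fun g h w => Cofork.IsColimit.hom_ext c₂ (by simpa using w)⟩
    have ep3 : Epi (prod.map (𝟙 X') q₂) := by
      haveI := ep2
      rw [show prod.map (𝟙 X') q₂ =
          (prod.braiding X' Y).hom ≫ prod.map q₂ (𝟙 X') ≫ (prod.braiding Y' X').hom by
        rw [← braid_natural_assoc, prod.symmetry, Category.comp_id]]
      exact epi_comp _ _
    have epQ : Epi (prod.map q₁ q₂) := by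
      haveI := ep1; haveI := ep3
      rw [show prod.map q₁ q₂ = prod.map q₁ (𝟙 Y) ≫ prod.map (𝟙 X') q₂ by
        rw [prod.map_map]; simp]
      exact epi_comp _ _
    refine ⟨cond, ⟨Cofork.IsColimit.mk' _ fun s => ?_⟩⟩
    have hs : prod.map u u' ≫ s.π = prod.map v v' ≫ s.π := s.condition
    have hA : prod.map u (initial.to Y) ≫ s.π = prod.map v (initial.to Y) ≫ s.π := by
      rw [show prod.map u (initial.to Y) = prod.map (𝟙 T₁) (initial.to T₂) ≫ prod.map u u' by
            rw [prod.map_map]; simp,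
          show prod.map v (initial.to Y) = prod.map (𝟙 T₁) (initial.to T₂) ≫ prod.map v v' by
            rw [prod.map_map]; simp,
          Category.assoc, Category.assoc, hs]
    obtain ⟨m₁, hm₁⟩ := Cofork.IsColimit.desc' c₁ s.π hA
    simp only [Cofork.π_ofπ] at hm₁
    have key : prod.map (initial.to X') u' ≫ m₁ = prod.map (initial.to X') v' ≫ m₁ := by
      rw [show prod.map (initial.to X') u' = prod.map (initial.to X) u' ≫ prod.map q₁ (𝟙 Y) by
            rw [prod.map_map]; simp,
          show prod.map (initial.to X') v' = prod.map (initial.to X) v' ≫ prod.map q₁ (𝟙 Y) by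
            rw [prod.map_map]; simp,
          Category.assoc, Category.assoc, hm₁,
          show prod.map (initial.to X) u' = prod.map (initial.to T₁) (𝟙 T₂) ≫ prod.map u u' by
            rw [prod.map_map]; simp,
          show prod.map (initial.to X) v' = prod.map (initial.to T₁) (𝟙 T₂) ≫ prod.map v v' by
            rw [prod.map_map]; simp,
          Category.assoc, Category.assoc, hs]
    have hB : prod.map u' (initial.to X') ≫ ((prod.braiding Y X').hom ≫ m₁) =
        prod.map v' (initial.to X') ≫ ((prod.braiding Y X').hom ≫ m₁) := by
      rw [← Category.assoc, braid_natural, ← Category.assoc, braid_natural,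
          Category.assoc, Category.assoc, key]
    obtain ⟨n₁, hn₁⟩ := Cofork.IsColimit.desc' c₂ ((prod.braiding Y X').hom ≫ m₁) hB
    simp only [Cofork.π_ofπ] at hn₁
    have fac : prod.map q₁ q₂ ≫ ((prod.braiding X' Y').hom ≫ n₁) = s.π := by
      rw [← Category.assoc, braid_natural, Category.assoc,
          show prod.map q₂ q₁ = prod.map (𝟙 Y) q₁ ≫ prod.map q₂ (𝟙 X') by
            rw [prod.map_map]; simp,
          Category.assoc, hn₁, ← Category.assoc, ← Category.assoc, Category.assoc _ _ (prod.braiding Y X').hom,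
          braid_natural, ← Category.assoc, prod.symmetry, Category.id_comp, hm₁]
    haveI := epQ
    refine ⟨(prod.braiding X' Y').hom ≫ n₁, by simpa using fac, fun {m} hm => ?_⟩
    simp only [Cofork.π_ofπ] at hm
    exact (cancel_epi (prod.map q₁ q₂)).1 (hm.trans fac.symm)
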